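/- For any finite set Y ⊆ 𝒳 and any weak tournament T with X(T) ⊆ Y, the majority graph of the profile representation of T relative to Y equals T: M(𝔓_Y(T)) = T. -/

import Mathlib

/- Formalization of the profile representation of (weighted) weak tournaments from
Holliday, Norman, Pacuit, Zahedian, "Impossibility theorems involving weakenings of
expansion consistency and resoluteness in voting". Candidates form an infinite
type `C`. -/

open Classical

noncomputable section

/-- `L` is a strict linear order on exactly the finite set `s`. -/
def IsStrictLinearOrderOn {C : Type} (s : Finset C) (L : C → C → Prop) : Prop :=
  (∀ x, ¬ L x x) ∧ (∀ x y z, L x y → L y z → L x z) ∧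
    (∀ x ∈ s, ∀ y ∈ s, x ≠ y → L x y ∨ L y x) ∧ ∀ x y, L x y → x ∈ s ∧ y ∈ s

/-- Restriction of a relation to a finite set `A`. -/
def restrictRel {C : Type} (A : Finset C) (L : C → C → Prop) : C → C → Prop :=
  fun x y => L x y ∧ x ∈ A ∧ y ∈ A

theorem IsStrictLinearOrderOn.restrict {C : Type} {s A : Finset C} {L : C → C → Prop}
    (h : IsStrictLinearOrderOn s L) (hA : A ⊆ s) :
    IsStrictLinearOrderOn A (restrictRel A L) := by
  obtain ⟨hirr, htr, htot, hdom⟩ := h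
  refine ⟨fun x hx => hirr x hx.1,
    fun x y z hxy hyz => ⟨htr _ _ _ hxy.1 hyz.1, hxy.2.1, hyz.2.2⟩, ?_,
    fun x y hxy => ⟨hxy.2.1, hxy.2.2⟩⟩
  intro x hx y hy hne
  rcases htot x (hA hx) y (hA hy) hne with h' | h'
  · exact Or.inl ⟨h', hx, hy⟩
  · exact Or.inr ⟨h', hy, hx⟩

/-- The image of a relation under the transposition of `a` and `b`:
`(x, y) ∈ swapRel a b L` iff `(π x, π y) ∈ L` where `π` swaps `a` and `b`. -/
def swapRel {C : Type} (a b : C) (L : C → C → Prop) : C → C → Prop :=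
  fun x y => L (Equiv.swap a b x) (Equiv.swap a b y)

theorem IsStrictLinearOrderOn.swapRel_mem {C : Type} {s : Finset C} {L : C → C → Prop}
    (a b : C) (h : IsStrictLinearOrderOn s L) :
    IsStrictLinearOrderOn (s.image (Equiv.swap a b)) (swapRel a b L) := by
  obtain ⟨hirr, htr, htot, hdom⟩ := h
  refine ⟨fun x => hirr _, fun x y z hxy hyz => htr _ _ _ hxy hyz, ?_, ?_⟩
  · intro x hx y hy hne
    obtain ⟨x', hx', rfl⟩ := Finset.mem_image.mp hx
    obtain ⟨y', hy', rfl⟩ := Finset.mem_image.mp hy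
    have hne' : x' ≠ y' := by rintro rfl; exact hne rfl
    have := htot x' hx' y' hy' hne'
    simpa [swapRel, Equiv.swap_apply_self] using this
  · intro x y hxy
    obtain ⟨h1, h2⟩ := hdom _ _ hxy
    exact ⟨Finset.mem_image.mpr ⟨_, h1, Equiv.swap_apply_self a b x⟩,
      Finset.mem_image.mpr ⟨_, h2, Equiv.swap_apply_self a b y⟩⟩

theorem IsStrictLinearOrderOn.of_swapRel {C : Type} {s : Finset C} {L : C → C → Prop}
    {a b : C} (h : IsStrictLinearOrderOn s (swapRel a b L)) :
    IsStrictLinearOrderOn (s.image (Equiv.swap a b)) L := by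
  have h2 := h.swapRel_mem a b
  have heq : swapRel a b (swapRel a b L) = L := by
    funext x y
    simp [swapRel, Equiv.swap_apply_self]
  rwa [heq] at h2

/-- A generalized anonymous profile: an integer-valued function on the strict linear
orders of a finite nonempty set of candidates (encoded as a function on all
relations, supported on the strict linear orders of `cands`). -/
structure GAProfile (C : Type) where
  cands : Finset C
  cands_nonempty : cands.Nonempty
  count : (C → C → Prop) → ℤ
  count_supp : ∀ L, count L ≠ 0 → IsStrictLinearOrderOn cands L

namespace GAProfile

variable {C : Type}

/-- `P` is an anonymous profile: all ballot counts are nonnegative. -/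
def IsAnon (P : GAProfile C) : Prop := ∀ L, 0 ≤ P.count L

/-- The margin `μ_{x,y}(P)` of `x` over `y` in `P`. -/
def margin (P : GAProfile C) (x y : C) : ℤ :=
  (∑ᶠ L : C → C → Prop, if L x y then P.count L else 0) -
    ∑ᶠ L : C → C → Prop, if L y x then P.count L else 0

theorem margin_neg (P : GAProfile C) (x y : C) : P.margin y x = - P.margin x y := by
  simp only [margin]
  ring

/-- The restriction `P|_Z` of a generalized anonymous profile to a nonempty subset
`Z` of its candidates. -/
def restrict (P : GAProfile C) (Z : Finset C) (hZ : Z.Nonempty) (hsub : Z ⊆ P.cands) :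
    GAProfile C where
  cands := Z
  cands_nonempty := hZ
  count := fun L => ∑ᶠ L' : C → C → Prop, if restrictRel Z L' = L then P.count L' else 0
  count_supp := by
    intro L hL
    by_contra hnot
    apply hL
    apply finsum_eq_zero_of_forall_eq_zero
    intro L'
    split_ifs with h
    · by_contra hc
      exact hnot (h ▸ ((P.count_supp L' hc).restrict hsub))
    · rfl

/-- The profile `P_{a⇄b}` obtained by transposing the candidates `a` and `b`. -/
def swapCands (P : GAProfile C) (a b : C) : GAProfile C where
  cands := P.cands.image (Equiv.swap a b)
  cands_nonempty := P.cands_nonempty.image _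
  count := fun L => P.count (swapRel a b L)
  count_supp := fun L h => (P.count_supp _ h).of_swapRel

end GAProfile

/-- A weak tournament: an asymmetric directed graph on a finite nonempty set of
vertices. -/
structure WeakTournament (C : Type) where
  verts : Finset C
  verts_nonempty : verts.Nonempty
  edge : C → C → Prop
  edge_asymm : ∀ x y, edge x y → ¬ edge y x
  edge_dom : ∀ x y, edge x y → x ∈ verts ∧ y ∈ verts

/-- A weighted weak tournament: a weak tournament together with a positive integer
weight on each edge (normalized to weight `0` off the edges). -/
structure WeightedWeakTournament (C : Type) where
  verts : Finset C
  verts_nonempty : verts.Nonempty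
  edge : C → C → Prop
  edge_asymm : ∀ x y, edge x y → ¬ edge y x
  edge_dom : ∀ x y, edge x y → x ∈ verts ∧ y ∈ verts
  wt : C → C → ℤ
  wt_pos : ∀ x y, edge x y → 0 < wt x y
  wt_eq_zero : ∀ x y, ¬ edge x y → wt x y = 0

namespace GAProfile

variable {C : Type}

/-- The majority graph `M(P)` of a generalized anonymous profile. -/
def maj (P : GAProfile C) : WeakTournament C where
  verts := P.cands
  verts_nonempty := P.cands_nonempty
  edge := fun x y => 0 < P.margin x y ∧ x ∈ P.cands ∧ y ∈ P.cands
  edge_asymm := by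
    intro x y h h'
    have hneg := P.margin_neg x y
    have h1 := h.1
    have h2 := h'.1
    omega
  edge_dom := fun x y h => ⟨h.2.1, h.2.2⟩

/-- The margin graph `ℳ(P)` of a generalized anonymous profile. -/
def marg (P : GAProfile C) : WeightedWeakTournament C where
  verts := P.cands
  verts_nonempty := P.cands_nonempty
  edge := fun x y => 0 < P.margin x y ∧ x ∈ P.cands ∧ y ∈ P.cands
  edge_asymm := by
    intro x y h h'
    have hneg := P.margin_neg x y
    have h1 := h.1
    have h2 := h'.1
    omega
  edge_dom := fun x y h => ⟨h.2.1, h.2.2⟩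
  wt := fun x y =>
    if 0 < P.margin x y ∧ x ∈ P.cands ∧ y ∈ P.cands then P.margin x y else 0
  wt_pos := by
    intro x y h
    show 0 < if 0 < P.margin x y ∧ x ∈ P.cands ∧ y ∈ P.cands then P.margin x y else 0
    rw [if_pos h]
    exact h.1
  wt_eq_zero := by
    intro x y h
    show (if 0 < P.margin x y ∧ x ∈ P.cands ∧ y ∈ P.cands then P.margin x y else 0) = 0
    exact if_neg h

end GAProfile

/-- The number `ψ_Y = 2 (|Y| − 2)!`. -/
def psi {C : Type} (Y : Finset C) : ℤ := 2 * ((Y.card - 2).factorial : ℤ)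

theorem psi_pos {C : Type} (Y : Finset C) : 0 < psi Y := by
  have h := Nat.factorial_pos (Y.card - 2)
  simp only [psi]
  omega

/-- The count function of the profile `𝐋_Y` consisting of one copy of each linear
order of `Y`. -/
def allOrdersCount {C : Type} (Y : Finset C) (L : C → C → Prop) : ℤ :=
  if IsStrictLinearOrderOn Y L then 1 else 0

/-- `L` ranks `a` first and `b` second among the candidates in `Y`. -/
def firstSecond {C : Type} (Y : Finset C) (a b : C) (L : C → C → Prop) : Prop :=
  (∀ z ∈ Y, z ≠ a → L a z) ∧ ∀ z ∈ Y, z ≠ a → z ≠ b → L b z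

/-- The count function of the `ab`-`Y`-block `𝐋_{ab-Y}`: one copy of each linear
order of `Y` with `a` first and `b` second. -/
def blockCount {C : Type} (Y : Finset C) (a b : C) (L : C → C → Prop) : ℤ :=
  if IsStrictLinearOrderOn Y L ∧ firstSecond Y a b L then 1 else 0

/-- The count function of the profile
`𝔏_Y(T) = 𝐋_Y + Σ_{a→b in T} (𝐋_{ab-Y} − 𝐋_{ba-Y})`. -/
def bigLCount {C : Type} (Y : Finset C) (T : WeakTournament C) : (C → C → Prop) → ℤ :=
  fun L => allOrdersCount Y L +
    ∑ p ∈ T.verts ×ˢ T.verts,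
      (if T.edge p.1 p.2 then blockCount Y p.1 p.2 L - blockCount Y p.2 p.1 L else 0)

/-- The profile `𝔏_Y(T)`. -/
def bigL {C : Type} (Y : Finset C) (T : WeakTournament C) (hsub : T.verts ⊆ Y) :
    GAProfile C where
  cands := Y
  cands_nonempty := by
    obtain ⟨x, hx⟩ := T.verts_nonempty
    exact ⟨x, hsub hx⟩
  count := bigLCount Y T
  count_supp := by
    intro L hL
    by_contra h
    apply hL
    have hb : ∀ a b : C, blockCount Y a b L = 0 := by
      intro a b
      exact if_neg (by exact fun hc => h hc.1)
    simp only [bigLCount, allOrdersCount, if_neg h, zero_add]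
    refine Finset.sum_eq_zero fun p _ => ?_
    rw [hb, hb, sub_self]
    split <;> rfl

/-- The profile representation `𝔓_Y(T) = 𝔏_Y(T)|_{X(T)}` of a weak tournament `T`
relative to `Y`. -/
def profileRep {C : Type} (Y : Finset C) (T : WeakTournament C) (hsub : T.verts ⊆ Y) :
    GAProfile C :=
  (bigL Y T hsub).restrict T.verts T.verts_nonempty hsub

/-- The count function of the profile
`𝔏_{Y,m}(𝒯) = m𝐋_Y + Σ_{a→b in 𝒯 with weight kψ_Y} (k𝐋_{ab-Y} − k𝐋_{ba-Y})`. -/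
def bigLWCount {C : Type} (Y : Finset C) (m : ℕ) (T : WeightedWeakTournament C) :
    (C → C → Prop) → ℤ :=
  fun L => (m : ℤ) * allOrdersCount Y L +
    ∑ p ∈ T.verts ×ˢ T.verts,
      (if T.edge p.1 p.2 then
        (T.wt p.1 p.2 / psi Y) * (blockCount Y p.1 p.2 L - blockCount Y p.2 p.1 L)
      else 0)

/-- The profile `𝔏_{Y,m}(𝒯)`. -/
def bigLW {C : Type} (Y : Finset C) (m : ℕ) (T : WeightedWeakTournament C)
    (hsub : T.verts ⊆ Y) : GAProfile C where
  cands := Y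
  cands_nonempty := by
    obtain ⟨x, hx⟩ := T.verts_nonempty
    exact ⟨x, hsub hx⟩
  count := bigLWCount Y m T
  count_supp := by
    intro L hL
    by_contra h
    apply hL
    have hb : ∀ a b : C, blockCount Y a b L = 0 := by
      intro a b
      exact if_neg (by exact fun hc => h hc.1)
    simp only [bigLWCount, allOrdersCount, if_neg h, mul_zero, zero_add]
    refine Finset.sum_eq_zero fun p _ => ?_
    rw [hb, hb, sub_self, mul_zero]
    split <;> rfl

/-- The profile representation `𝔓_{Y,m}(𝒯) = 𝔏_{Y,m}(𝒯)|_{X(𝒯)}` of a weighted weak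
tournament `𝒯` relative to `Y` and `m`. -/
def profileRepW {C : Type} (Y : Finset C) (m : ℕ) (T : WeightedWeakTournament C)
    (hsub : T.verts ⊆ Y) : GAProfile C :=
  (bigLW Y m T hsub).restrict T.verts T.verts_nonempty hsub

/-- Membership in `𝕎𝕋^w_{Y,m}`: a weighted weak tournament on vertices included in
`Y`, each of whose weights is `kψ_Y` for some positive `k ≤ m`. -/
def MemWTw {C : Type} (Y : Finset C) (m : ℕ) (T : WeightedWeakTournament C) : Prop :=
  T.verts ⊆ Y ∧
    ∀ a b, T.edge a b → ∃ k : ℕ, 0 < k ∧ k ≤ m ∧ T.wt a b = (k : ℤ) * psi Y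

namespace MajAux

variable {C : Type}

theorem slo_finite (Y : Finset C) :
    {L : C → C → Prop | IsStrictLinearOrderOn Y L}.Finite := by
  apply Set.Finite.of_finite_image (f := fun L (x y : ↥Y) => L x.1 y.1)
  · exact Set.toFinite _
  · intro L hL L' hL' h
    funext x y
    apply propext
    constructor
    · intro hxy
      obtain ⟨hx, hy⟩ := hL.2.2.2 x y hxy
      have h' : L x y = L' x y := congrFun (congrFun h ⟨x, hx⟩) ⟨y, hy⟩
      exact h' ▸ hxy
    · intro hxy
      obtain ⟨hx, hy⟩ := hL'.2.2.2 x y hxy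
      have h' : L x y = L' x y := congrFun (congrFun h ⟨x, hx⟩) ⟨y, hy⟩
      exact h'.symm ▸ hxy

/-- The finite set of strict linear orders on `Y`. -/
noncomputable def sloF (Y : Finset C) : Finset (C → C → Prop) :=
  (slo_finite Y).toFinset

theorem mem_sloF {Y : Finset C} {L : C → C → Prop} :
    L ∈ sloF Y ↔ IsStrictLinearOrderOn Y L := Set.Finite.mem_toFinset _

/-- `netSum Y c x y` = net support for `x` over `y` among orders in `sloF Y`. -/
noncomputable def netSum (Y : Finset C) (c : (C → C → Prop) → ℤ) (x y : C) : ℤ :=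
  ∑ L ∈ sloF Y, ((if L x y then c L else 0) - (if L y x then c L else 0))

theorem margin_eq_netSum (P : GAProfile C) (x y : C) :
    P.margin x y = netSum P.cands P.count x y := by
  unfold GAProfile.margin netSum
  rw [finsum_eq_sum_of_support_subset _ (s := sloF P.cands),
      finsum_eq_sum_of_support_subset _ (s := sloF P.cands), ← Finset.sum_sub_distrib]
  · intro L hL
    simp only [Function.mem_support] at hL
    have : P.count L ≠ 0 := by intro h; apply hL; simp [h]
    exact mem_sloF.mpr (P.count_supp L this)
  · intro L hL
    simp only [Function.mem_support] at hL
    have : P.count L ≠ 0 := by intro h; apply hL; simp [h]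
    exact mem_sloF.mpr (P.count_supp L this)

theorem margin_self (P : GAProfile C) (x : C) : P.margin x x = 0 := by
  unfold GAProfile.margin; ring

theorem netSum_anti (Y : Finset C) (c : (C → C → Prop) → ℤ) (x y : C) :
    netSum Y c x y = - netSum Y c y x := by
  unfold netSum
  rw [← Finset.sum_neg_distrib]
  exact Finset.sum_congr rfl fun L _ => by ring

theorem netSum_add (Y : Finset C) (c d : (C → C → Prop) → ℤ) (x y : C) :
    netSum Y (fun L => c L + d L) x y = netSum Y c x y + netSum Y d x y := by
  unfold netSum
  rw [← Finset.sum_add_distrib]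
  refine Finset.sum_congr rfl fun L _ => ?_
  by_cases h1 : L x y <;> by_cases h2 : L y x <;> simp [h1, h2] <;> ring

theorem netSum_sum {ι : Type} (Y : Finset C) (s : Finset ι)
    (g : ι → (C → C → Prop) → ℤ) (x y : C) :
    netSum Y (fun L => ∑ p ∈ s, g p L) x y = ∑ p ∈ s, netSum Y (g p) x y := by
  unfold netSum
  rw [Finset.sum_comm]
  refine Finset.sum_congr rfl fun L _ => ?_
  by_cases h1 : L x y <;> by_cases h2 : L y x <;>
    simp [h1, h2, Finset.sum_sub_distrib]

theorem netSum_ite (Y : Finset C) (e : Prop) (c : (C → C → Prop) → ℤ) (x y : C) :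
    netSum Y (fun L => if e then c L else 0) x y = if e then netSum Y c x y else 0 := by
  by_cases he : e <;> simp [he, netSum]

theorem netSum_sub (Y : Finset C) (c d : (C → C → Prop) → ℤ) (x y : C) :
    netSum Y (fun L => c L - d L) x y = netSum Y c x y - netSum Y d x y := by
  unfold netSum
  rw [← Finset.sum_sub_distrib]
  refine Finset.sum_congr rfl fun L _ => ?_
  by_cases h1 : L x y <;> by_cases h2 : L y x <;> simp [h1, h2] <;> ring

/- ### swap machinery -/

theorem swap_mem_iff {Y : Finset C} {u v : C} (hu : u ∈ Y) (hv : v ∈ Y) (z : C) :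
    Equiv.swap u v z ∈ Y ↔ z ∈ Y := by
  rcases eq_or_ne z u with rfl | hzu
  · simp [Equiv.swap_apply_left, hu, hv]
  · rcases eq_or_ne z v with rfl | hzv
    · simp [Equiv.swap_apply_right, hu, hv]
    · rw [Equiv.swap_apply_of_ne_of_ne hzu hzv]

theorem image_swap_self {Y : Finset C} {u v : C} (hu : u ∈ Y) (hv : v ∈ Y) :
    Y.image (Equiv.swap u v) = Y := by
  ext z
  simp only [Finset.mem_image]
  constructor
  · rintro ⟨w, hw, rfl⟩; exact (swap_mem_iff hu hv w).mpr hw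
  · intro hz
    exact ⟨Equiv.swap u v z, (swap_mem_iff hu hv _).mpr (by simpa using hz),
      by simp⟩

theorem swapRel_involutive (u v : C) (L : C → C → Prop) :
    swapRel u v (swapRel u v L) = L := by
  funext x y; simp [swapRel]

theorem slo_swapRel_iff {Y : Finset C} {u v : C} (hu : u ∈ Y) (hv : v ∈ Y)
    (L : C → C → Prop) :
    IsStrictLinearOrderOn Y (swapRel u v L) ↔ IsStrictLinearOrderOn Y L := by
  constructor
  · intro h
    have := h.of_swapRel
    rwa [image_swap_self hu hv] at this
  · intro h
    have := h.swapRel_mem u v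
    rwa [image_swap_self hu hv] at this

theorem sum_swap_slo {Y : Finset C} {u v : C} (hu : u ∈ Y) (hv : v ∈ Y)
    (f : (C → C → Prop) → ℤ) :
    ∑ L ∈ sloF Y, f L = ∑ L ∈ sloF Y, f (swapRel u v L) := by
  refine Finset.sum_nbij' (fun L => swapRel u v L) (fun L => swapRel u v L)
    ?_ ?_ ?_ ?_ ?_
  · intro L hL
    exact mem_sloF.mpr ((slo_swapRel_iff hu hv L).mpr (mem_sloF.mp hL))
  · intro L hL
    exact mem_sloF.mpr ((slo_swapRel_iff hu hv L).mpr (mem_sloF.mp hL))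
  · intro L _; exact swapRel_involutive u v L
  · intro L _; exact swapRel_involutive u v L
  · intro L _; rw [swapRel_involutive]

theorem firstSecond_swapRel {Y : Finset C} {u v : C} (hu : u ∈ Y) (hv : v ∈ Y)
    (a b : C) (L : C → C → Prop) :
    firstSecond Y a b (swapRel u v L) ↔
      firstSecond Y (Equiv.swap u v a) (Equiv.swap u v b) L := by
  set σ := Equiv.swap u v with hσ
  have hinv : ∀ z, σ (σ z) = z := fun z => Equiv.swap_apply_self u v z
  constructor
  · rintro ⟨h1, h2⟩
    constructor
    · intro z hz hza
      have hz' : σ z ∈ Y := (swap_mem_iff hu hv z).mpr hz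
      have hza' : σ z ≠ a := fun h => hza (by rw [← hinv z, h])
      have := h1 (σ z) hz' hza'
      simpa [swapRel, ← hσ, hinv] using this
    · intro z hz hza hzb
      have hz' : σ z ∈ Y := (swap_mem_iff hu hv z).mpr hz
      have hza' : σ z ≠ a := fun h => hza (by rw [← hinv z, h])
      have hzb' : σ z ≠ b := fun h => hzb (by rw [← hinv z, h])
      have := h2 (σ z) hz' hza' hzb'
      simpa [swapRel, ← hσ, hinv] using this
  · rintro ⟨h1, h2⟩
    constructor
    · intro z hz hza
      have hz' : σ z ∈ Y := (swap_mem_iff hu hv z).mpr hz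
      have hza' : σ z ≠ σ a := fun h => hza (σ.injective h)
      exact h1 (σ z) hz' hza'
    · intro z hz hza hzb
      have hz' : σ z ∈ Y := (swap_mem_iff hu hv z).mpr hz
      have hza' : σ z ≠ σ a := fun h => hza (σ.injective h)
      have hzb' : σ z ≠ σ b := fun h => hzb (σ.injective h)
      exact h2 (σ z) hz' hza' hzb'

theorem blockCount_swapRel {Y : Finset C} {u v : C} (hu : u ∈ Y) (hv : v ∈ Y)
    (a b : C) (L : C → C → Prop) :
    blockCount Y a b (swapRel u v L) =
      blockCount Y (Equiv.swap u v a) (Equiv.swap u v b) L := by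
  unfold blockCount
  congr 1
  apply propext
  rw [slo_swapRel_iff hu hv, firstSecond_swapRel hu hv]

/- ### block counting -/

/-- The number of linear orders of `Y` with `a` first and `b` second. -/
noncomputable def NN (Y : Finset C) (a b : C) : ℤ :=
  ∑ L ∈ sloF Y, blockCount Y a b L

theorem NN_nonneg (Y : Finset C) (a b : C) : 0 ≤ NN Y a b :=
  Finset.sum_nonneg fun L _ => by unfold blockCount; split <;> simp

theorem NN_swap {Y : Finset C} {a b : C} (ha : a ∈ Y) (hb : b ∈ Y) :
    NN Y a b = NN Y b a := by
  unfold NN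
  rw [sum_swap_slo ha hb]
  refine Finset.sum_congr rfl fun L _ => ?_
  rw [blockCount_swapRel ha hb]
  simp

/-- In a block order, the first candidate beats everyone, and the second beats
everyone except the first. -/
theorem block_rel {Y : Finset C} {a b x y : C} {L : C → C → Prop}
    (hL : IsStrictLinearOrderOn Y L) (hfs : firstSecond Y a b L)
    (hab : a ≠ b) (hb : b ∈ Y) (hx : x = a ∨ x = b) (hy : y ∈ Y)
    (hya : y ≠ a) (hyb : y ≠ b) : L x y := by
  rcases hx with rfl | rfl
  · exact hfs.1 y hy hya
  · exact hfs.2 y hy hya hyb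

theorem slo_asymm {Y : Finset C} {L : C → C → Prop}
    (hL : IsStrictLinearOrderOn Y L) {x y : C} (h : L x y) : ¬ L y x :=
  fun h' => hL.1 x (hL.2.1 x y x h h')

theorem netSum_block_self {Y : Finset C} {a b : C} (ha : a ∈ Y) (hb : b ∈ Y)
    (hab : a ≠ b) : netSum Y (blockCount Y a b) a b = NN Y a b := by
  unfold netSum NN
  refine Finset.sum_congr rfl fun L _ => ?_
  by_cases h : IsStrictLinearOrderOn Y L ∧ firstSecond Y a b L
  · have hab' : L a b := h.2.1 b hb (Ne.symm hab)
    have hba : ¬ L b a := slo_asymm h.1 hab'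
    simp [blockCount, h, hab', hba]
  · simp [blockCount, h]

theorem netSum_block_top {Y : Finset C} {a b x y : C} (ha : a ∈ Y) (hb : b ∈ Y)
    (hab : a ≠ b) (hx : x = a ∨ x = b) (hy : y ∈ Y) (hya : y ≠ a) (hyb : y ≠ b) :
    netSum Y (blockCount Y a b) x y = NN Y a b := by
  unfold netSum NN
  refine Finset.sum_congr rfl fun L _ => ?_
  by_cases h : IsStrictLinearOrderOn Y L ∧ firstSecond Y a b L
  · have hxy : L x y := block_rel h.1 h.2 hab hb hx hy hya hyb
    have hyx : ¬ L y x := slo_asymm h.1 hxy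
    simp [blockCount, h, hxy, hyx]
  · simp [blockCount, h]

theorem netSum_block_offdiag {Y : Finset C} {a b x y : C} (hx : x ∈ Y) (hy : y ∈ Y)
    (hxy : x ≠ y) (hxa : x ≠ a) (hxb : x ≠ b) (hya : y ≠ a) (hyb : y ≠ b) :
    netSum Y (blockCount Y a b) x y = 0 := by
  have key : netSum Y (blockCount Y a b) x y = - netSum Y (blockCount Y a b) x y := by
    conv_lhs => rw [netSum, sum_swap_slo hx hy]
    rw [netSum, ← Finset.sum_neg_distrib]
    refine Finset.sum_congr rfl fun L _ => ?_
    have hbc : blockCount Y a b (swapRel x y L) = blockCount Y a b L := by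
      rw [blockCount_swapRel hx hy]
      rw [Equiv.swap_apply_of_ne_of_ne (Ne.symm hxa) (Ne.symm hya),
        Equiv.swap_apply_of_ne_of_ne (Ne.symm hxb) (Ne.symm hyb)]
    have h1 : swapRel x y L x y = L y x := by
      simp [swapRel, Equiv.swap_apply_left, Equiv.swap_apply_right]
    have h2 : swapRel x y L y x = L x y := by
      simp [swapRel, Equiv.swap_apply_left, Equiv.swap_apply_right]
    rw [hbc, h1, h2]
    ring
  omega

theorem netSum_allOrders {Y : Finset C} {x y : C} (hx : x ∈ Y) (hy : y ∈ Y)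
    (hxy : x ≠ y) : netSum Y (allOrdersCount Y) x y = 0 := by
  have key : netSum Y (allOrdersCount Y) x y = - netSum Y (allOrdersCount Y) x y := by
    conv_lhs => rw [netSum, sum_swap_slo hx hy]
    rw [netSum, ← Finset.sum_neg_distrib]
    refine Finset.sum_congr rfl fun L _ => ?_
    have hbc : allOrdersCount Y (swapRel x y L) = allOrdersCount Y L := by
      unfold allOrdersCount
      congr 1
      exact propext (slo_swapRel_iff hx hy L)
    have h1 : swapRel x y L x y = L y x := by
      simp [swapRel, Equiv.swap_apply_left, Equiv.swap_apply_right]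
    have h2 : swapRel x y L y x = L x y := by
      simp [swapRel, Equiv.swap_apply_left, Equiv.swap_apply_right]
    rw [hbc, h1, h2]
    ring
  omega

/- ### existence of a block order -/

/-- A ranking function on `Y` putting `a` at rank 0 and `b` at rank 1. -/
noncomputable def rankF (Y : Finset C) (a b : C) : C → ℕ := fun z =>
  if z = a then 0 else if z = b then 1 else
    if hz : z ∈ Y then ((Fintype.equivFin ↥Y) ⟨z, hz⟩ : ℕ) + 2 else 2

theorem rankF_injOn {Y : Finset C} (a b : C) :
    ∀ z ∈ Y, ∀ w ∈ Y, rankF Y a b z = rankF Y a b w → z = w := by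
  intro z hz w hw h
  unfold rankF at h
  simp only [dif_pos hz, dif_pos hw] at h
  split_ifs at h
  all_goals first
    | (subst_vars; rfl)
    | omega
    | skip
  have : (⟨z, hz⟩ : ↥Y) = ⟨w, hw⟩ :=
    (Fintype.equivFin ↥Y).injective (Fin.val_injective (by omega))
  exact congrArg Subtype.val this

/-- The canonical linear order on `Y` with `a` first and `b` second. -/
def L0 (Y : Finset C) (a b : C) : C → C → Prop :=
  fun x y => x ∈ Y ∧ y ∈ Y ∧ rankF Y a b x < rankF Y a b y

theorem L0_slo (Y : Finset C) (a b : C) : IsStrictLinearOrderOn Y (L0 Y a b) := by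
  refine ⟨fun x hx => lt_irrefl _ hx.2.2,
    fun x y z hxy hyz => ⟨hxy.1, hyz.2.1, lt_trans hxy.2.2 hyz.2.2⟩, ?_,
    fun x y hxy => ⟨hxy.1, hxy.2.1⟩⟩
  intro x hx y hy hne
  have : rankF Y a b x ≠ rankF Y a b y := fun h => hne (rankF_injOn a b x hx y hy h)
  rcases lt_or_gt_of_ne this with h | h
  · exact Or.inl ⟨hx, hy, h⟩
  · exact Or.inr ⟨hy, hx, h⟩

theorem L0_firstSecond {Y : Finset C} {a b : C} (ha : a ∈ Y) (hb : b ∈ Y)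
    (hab : a ≠ b) : firstSecond Y a b (L0 Y a b) := by
  constructor
  · intro z hz hza
    refine ⟨ha, hz, ?_⟩
    have h0 : rankF Y a b a = 0 := by simp [rankF]
    have : rankF Y a b z ≠ 0 := by
      intro h
      exact hza (rankF_injOn a b z hz a ha (by rw [h, h0]))
    omega
  · intro z hz hza hzb
    refine ⟨hb, hz, ?_⟩
    have h1 : rankF Y a b b = 1 := by simp [rankF, Ne.symm hab]
    have hz2 : 2 ≤ rankF Y a b z := by
      unfold rankF
      rw [if_neg hza, if_neg hzb, dif_pos hz]
      omega
    omega

theorem NN_pos {Y : Finset C} {a b : C} (ha : a ∈ Y) (hb : b ∈ Y) (hab : a ≠ b) :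
    1 ≤ NN Y a b := by
  have hmem : L0 Y a b ∈ sloF Y := mem_sloF.mpr (L0_slo Y a b)
  have hval : blockCount Y a b (L0 Y a b) = 1 := by
    rw [blockCount, if_pos ⟨L0_slo Y a b, L0_firstSecond ha hb hab⟩]
  calc (1 : ℤ) = blockCount Y a b (L0 Y a b) := hval.symm
    _ ≤ NN Y a b := Finset.single_le_sum
        (fun L _ => by unfold blockCount; split <;> simp) hmem

/- ### orthogonality -/

theorem netSum_block_diff_eq_zero {Y : Finset C} {a b x y : C}
    (ha : a ∈ Y) (hb : b ∈ Y) (hx : x ∈ Y) (hy : y ∈ Y)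
    (hab : a ≠ b) (hxy : x ≠ y) (h1 : (a, b) ≠ (x, y)) (h2 : (a, b) ≠ (y, x)) :
    netSum Y (blockCount Y a b) x y = netSum Y (blockCount Y b a) x y := by
  by_cases hxab : x = a ∨ x = b
  · -- then y ∉ {a, b}
    have hya : y ≠ a := by
      rintro rfl
      rcases hxab with rfl | rfl
      · exact hxy rfl
      · exact h2 (by simp)
    have hyb : y ≠ b := by
      rintro rfl
      rcases hxab with rfl | rfl
      · exact h1 (by simp)
      · exact hxy rfl
    rw [netSum_block_top ha hb hab hxab hy hya hyb,
      netSum_block_top hb ha (Ne.symm hab) hxab.symm hy hyb hya,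
      NN_swap ha hb]
  · push_neg at hxab
    by_cases hyab : y = a ∨ y = b
    · rw [netSum_anti, netSum_anti Y (blockCount Y b a),
        netSum_block_top ha hb hab hyab hx hxab.1 hxab.2,
        netSum_block_top hb ha (Ne.symm hab) hyab.symm hx hxab.2 hxab.1,
        NN_swap ha hb]
    · push_neg at hyab
      rw [netSum_block_offdiag hx hy hxy hxab.1 hxab.2 hyab.1 hyab.2,
        netSum_block_offdiag hx hy hxy hxab.2 hxab.1 hyab.2 hyab.1]

/- ### the margin of `bigL` -/

theorem edge_irrefl (T : WeakTournament C) (z : C) : ¬ T.edge z z :=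
  fun h => T.edge_asymm z z h h

theorem margin_bigL (Y : Finset C) (T : WeakTournament C) (hsub : T.verts ⊆ Y)
    {x y : C} (hx : x ∈ Y) (hy : y ∈ Y) (hxy : x ≠ y) :
    (bigL Y T hsub).margin x y =
      ∑ p ∈ T.verts ×ˢ T.verts, (if T.edge p.1 p.2 then
        netSum Y (blockCount Y p.1 p.2) x y - netSum Y (blockCount Y p.2 p.1) x y
      else 0) := by
  rw [margin_eq_netSum]
  show netSum Y (bigLCount Y T) x y = _
  unfold bigLCount
  rw [netSum_add, netSum_sum, netSum_allOrders hx hy hxy, zero_add]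
  refine Finset.sum_congr rfl fun p _ => ?_
  rw [netSum_ite, netSum_sub]

theorem margin_bigL_edge (Y : Finset C) (T : WeakTournament C) (hsub : T.verts ⊆ Y)
    {x y : C} (hE : T.edge x y) :
    (bigL Y T hsub).margin x y = NN Y x y + NN Y y x := by
  obtain ⟨hxv, hyv⟩ := T.edge_dom x y hE
  have hx : x ∈ Y := hsub hxv
  have hy : y ∈ Y := hsub hyv
  have hxy : x ≠ y := by rintro rfl; exact edge_irrefl T x hE
  rw [margin_bigL Y T hsub hx hy hxy]
  rw [Finset.sum_eq_single_of_mem (x, y) (Finset.mem_product.mpr ⟨hxv, hyv⟩)]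
  · rw [if_pos hE, netSum_block_self hx hy hxy,
      netSum_anti Y (blockCount Y y x), netSum_block_self hy hx (Ne.symm hxy)]
    ring
  · rintro ⟨a, b⟩ hab hne
    simp only at hne ⊢
    by_cases hE' : T.edge a b
    · rw [if_pos hE']
      obtain ⟨hav, hbv⟩ := T.edge_dom a b hE'
      have hab' : a ≠ b := by rintro rfl; exact edge_irrefl T a hE'
      have h1 : (a, b) ≠ (x, y) := hne
      have h2 : (a, b) ≠ (y, x) := by
        rintro h
        rw [Prod.mk.injEq] at h
        exact T.edge_asymm x y hE (h.1 ▸ h.2 ▸ hE')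
      rw [netSum_block_diff_eq_zero (hsub hav) (hsub hbv) hx hy hab' hxy h1 h2]
      ring
    · rw [if_neg hE']

theorem margin_bigL_none (Y : Finset C) (T : WeakTournament C) (hsub : T.verts ⊆ Y)
    {x y : C} (hx : x ∈ Y) (hy : y ∈ Y) (hxy : x ≠ y)
    (h1 : ¬ T.edge x y) (h2 : ¬ T.edge y x) :
    (bigL Y T hsub).margin x y = 0 := by
  rw [margin_bigL Y T hsub hx hy hxy]
  refine Finset.sum_eq_zero fun p hp => ?_
  by_cases hE' : T.edge p.1 p.2
  · rw [if_pos hE']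
    obtain ⟨hav, hbv⟩ := T.edge_dom p.1 p.2 hE'
    have hab' : p.1 ≠ p.2 := by
      intro h; exact edge_irrefl T p.1 (by rw [← h] at hE'; exact hE')
    have hne1 : (p.1, p.2) ≠ (x, y) := by
      intro h
      rw [Prod.mk.injEq] at h
      exact h1 (h.1 ▸ h.2 ▸ hE')
    have hne2 : (p.1, p.2) ≠ (y, x) := by
      intro h
      rw [Prod.mk.injEq] at h
      exact h2 (h.1 ▸ h.2 ▸ hE')
    rw [netSum_block_diff_eq_zero (hsub hav) (hsub hbv) hx hy hab' hxy hne1 hne2]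
    ring
  · rw [if_neg hE']

/- ### margins are preserved by restriction -/

theorem restrict_sum (P : GAProfile C) (Z : Finset C) (hZ : Z.Nonempty)
    (hsub : Z ⊆ P.cands) {u v : C} (hu : u ∈ Z) (hv : v ∈ Z) :
    (∑ᶠ L : C → C → Prop, if L u v then (P.restrict Z hZ hsub).count L else 0) =
      ∑ᶠ L : C → C → Prop, if L u v then P.count L else 0 := by
  have hsupp1 : (Function.support fun M => if M u v then (P.restrict Z hZ hsub).count M else 0)
      ⊆ (sloF Z : Set (C → C → Prop)) := by
    intro M hM
    simp only [Function.mem_support] at hM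
    have : (P.restrict Z hZ hsub).count M ≠ 0 := by intro h; apply hM; simp [h]
    exact mem_sloF.mpr ((P.restrict Z hZ hsub).count_supp M this)
  have hsupp2 : (Function.support fun L => if L u v then P.count L else 0)
      ⊆ (sloF P.cands : Set (C → C → Prop)) := by
    intro L hL
    simp only [Function.mem_support] at hL
    have : P.count L ≠ 0 := by intro h; apply hL; simp [h]
    exact mem_sloF.mpr (P.count_supp L this)
  rw [finsum_eq_sum_of_support_subset _ hsupp1, finsum_eq_sum_of_support_subset _ hsupp2]
  have hcount : ∀ M, (P.restrict Z hZ hsub).count M =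
      ∑ L' ∈ sloF P.cands, (if restrictRel Z L' = M then P.count L' else 0) := by
    intro M
    show (∑ᶠ L' : C → C → Prop, if restrictRel Z L' = M then P.count L' else 0) = _
    apply finsum_eq_sum_of_support_subset
    intro L' hL'
    simp only [Function.mem_support] at hL'
    have : P.count L' ≠ 0 := by intro h; apply hL'; simp [h]
    exact mem_sloF.mpr (P.count_supp L' this)
  calc ∑ M ∈ sloF Z, (if M u v then (P.restrict Z hZ hsub).count M else 0)
      = ∑ M ∈ sloF Z, ∑ L' ∈ sloF P.cands,
          (if restrictRel Z L' = M then (if M u v then P.count L' else 0) else 0) := by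
        refine Finset.sum_congr rfl fun M _ => ?_
        rw [hcount M]
        by_cases hM : M u v
        · rw [if_pos hM]
          refine Finset.sum_congr rfl fun L' _ => ?_
          by_cases h : restrictRel Z L' = M <;> simp [h, hM]
        · rw [if_neg hM]
          symm
          refine Finset.sum_eq_zero fun L' _ => ?_
          by_cases h : restrictRel Z L' = M <;> simp [h, hM]
    _ = ∑ L' ∈ sloF P.cands, ∑ M ∈ sloF Z,
          (if restrictRel Z L' = M then (if M u v then P.count L' else 0) else 0) :=
        Finset.sum_comm
    _ = ∑ L' ∈ sloF P.cands, (if L' u v then P.count L' else 0) := by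
        refine Finset.sum_congr rfl fun L' hL' => ?_
        rw [Finset.sum_ite_eq]
        have hslo : IsStrictLinearOrderOn P.cands L' := mem_sloF.mp hL'
        have hmem : restrictRel Z L' ∈ sloF Z := mem_sloF.mpr (hslo.restrict hsub)
        rw [if_pos hmem]
        have : restrictRel Z L' u v ↔ L' u v := by
          unfold restrictRel
          exact ⟨fun h => h.1, fun h => ⟨h, hu, hv⟩⟩
        by_cases h : L' u v
        · rw [if_pos (this.mpr h), if_pos h]
        · rw [if_neg (fun h' => h (this.mp h')), if_neg h]

theorem margin_restrict (P : GAProfile C) (Z : Finset C) (hZ : Z.Nonempty)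
    (hsub : Z ⊆ P.cands) {x y : C} (hx : x ∈ Z) (hy : y ∈ Z) :
    (P.restrict Z hZ hsub).margin x y = P.margin x y := by
  unfold GAProfile.margin
  rw [restrict_sum P Z hZ hsub hx hy, restrict_sum P Z hZ hsub hy hx]

theorem wt_ext {T1 T2 : WeakTournament C} (hv : T1.verts = T2.verts)
    (he : T1.edge = T2.edge) : T1 = T2 := by
  cases T1; cases T2
  simp only at hv he
  subst hv; subst he
  rfl

end MajAux

/-- For any finite set `Y` of candidates and any weak tournament `T`
with `X(T) ⊆ Y`, the majority graph of the profile representation of `T` relative to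
`Y` equals `T`: `M(𝔓_Y(T)) = T`. -/
theorem maj_profileRep (C : Type) [Infinite C] (Y : Finset C) (T : WeakTournament C)
    (hsub : T.verts ⊆ Y) :
    (profileRep Y T hsub).maj = T := by
  apply MajAux.wt_ext
  · rfl
  · funext x y
    apply propext
    show 0 < (profileRep Y T hsub).margin x y ∧
        x ∈ (profileRep Y T hsub).cands ∧ y ∈ (profileRep Y T hsub).cands ↔ T.edge x y
    have hcands : (profileRep Y T hsub).cands = T.verts := rfl
    constructor
    · rintro ⟨hpos, hx, hy⟩
      rw [hcands] at hx hy
      have hxy : x ≠ y := by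
        rintro rfl
        rw [MajAux.margin_self] at hpos
        exact absurd hpos (lt_irrefl 0)
      have hm : (profileRep Y T hsub).margin x y = (bigL Y T hsub).margin x y :=
        MajAux.margin_restrict _ _ _ _ hx hy
      by_contra hne
      by_cases hyx : T.edge y x
      · have heq := MajAux.margin_bigL_edge Y T hsub hyx
        have hneg := (bigL Y T hsub).margin_neg x y
        have h1 := MajAux.NN_pos (hsub (T.edge_dom y x hyx).1)
          (hsub (T.edge_dom y x hyx).2) (Ne.symm hxy)
        have h2 := MajAux.NN_pos (hsub (T.edge_dom y x hyx).2)
          (hsub (T.edge_dom y x hyx).1) hxy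
        rw [hm] at hpos
        omega
      · have h0 := MajAux.margin_bigL_none Y T hsub (hsub hx) (hsub hy) hxy hne hyx
        rw [hm, h0] at hpos
        exact absurd hpos (lt_irrefl 0)
    · intro hE
      obtain ⟨hx, hy⟩ := T.edge_dom x y hE
      refine ⟨?_, hcands ▸ hx, hcands ▸ hy⟩
      have hxy : x ≠ y := by rintro rfl; exact MajAux.edge_irrefl T x hE
      have hm : (profileRep Y T hsub).margin x y = (bigL Y T hsub).margin x y :=
        MajAux.margin_restrict _ _ _ _ hx hy
      rw [hm, MajAux.margin_bigL_edge Y T hsub hE]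
      have h1 := MajAux.NN_pos (hsub hx) (hsub hy) hxy
      have h2 := MajAux.NN_pos (hsub hy) (hsub hx) (Ne.symm hxy)
      omega
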